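/- Fix n ∈ ℕ and k ∈ {1,...,⌊n/2⌋}. Let a, b be real sequences of length n with b ≥ 0 coordinatewise. With φ_k as the trimmed sum defined via clipping to [a*_{1+k}, a*_{n-k}], we have φ_k(a + b) ≥ φ_k(a) + Σ_{i=1}^{n-2k} b*_i, where b* is the non-decreasing rearrangement of b. -/

import Mathlib

/-- The clipping (truncation) function `φ_{α,β}`: clips `x` to the interval `[α, β]`. -/
noncomputable def clip (α β x : ℝ) : ℝ := max α (min x β)

/-- The trimmed sum `φ_k(a) = Σ_i φ_{a*_{1+k}, a*_{n-k}}(a_i)`, where `a*` is the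
non-decreasing rearrangement of `a`. -/
noncomputable def trimSum {n : ℕ} (k : ℕ) (hk1 : 1 ≤ k) (hk2 : 2 * k ≤ n)
    (a : Fin n → ℝ) : ℝ :=
  ∑ i : Fin n,
    clip ((a ∘ Tuple.sort a) ⟨k, by omega⟩) ((a ∘ Tuple.sort a) ⟨n - k - 1, by omega⟩) (a i)

lemma clip_le_clip {α α' β β' x x' : ℝ} (h1 : α ≤ α') (h2 : β ≤ β') (h3 : x ≤ x') :
    clip α β x ≤ clip α' β' x' :=
  max_le_max h1 (min_le_min h3 h2)

/-- At most `j` entries lie strictly below the `j`-th order statistic. -/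
lemma card_lt_orderStat {n : ℕ} (a : Fin n → ℝ) (j : Fin n) :
    (Finset.univ.filter (fun i => a i < (a ∘ Tuple.sort a) j)).card ≤ j.1 := by
  have hsub : (Finset.univ.filter (fun i => a i < (a ∘ Tuple.sort a) j)) ⊆
      (Finset.Iio j).image (Tuple.sort a) := by
    intro i hi
    simp only [Finset.mem_filter] at hi
    rw [Finset.mem_image]
    refine ⟨(Tuple.sort a).symm i, ?_, by simp⟩
    rw [Finset.mem_Iio]
    by_contra h
    push_neg at h
    have hmono := Tuple.monotone_sort a h
    simp only [Function.comp_apply, Equiv.apply_symm_apply] at hmono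
    exact absurd hi.2 (not_lt.mpr hmono)
  calc (Finset.univ.filter (fun i => a i < (a ∘ Tuple.sort a) j)).card
      ≤ ((Finset.Iio j).image (Tuple.sort a)).card := Finset.card_le_card hsub
    _ ≤ (Finset.Iio j).card := Finset.card_image_le
    _ = j.1 := Fin.card_Iio j

/-- At most `n - 1 - j` entries lie strictly above the `j`-th order statistic. -/
lemma card_gt_orderStat {n : ℕ} (a : Fin n → ℝ) (j : Fin n) :
    (Finset.univ.filter (fun i => (a ∘ Tuple.sort a) j < a i)).card ≤ n - 1 - j.1 := by
  have hsub : (Finset.univ.filter (fun i => (a ∘ Tuple.sort a) j < a i)) ⊆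
      (Finset.Ioi j).image (Tuple.sort a) := by
    intro i hi
    simp only [Finset.mem_filter] at hi
    rw [Finset.mem_image]
    refine ⟨(Tuple.sort a).symm i, ?_, by simp⟩
    rw [Finset.mem_Ioi]
    by_contra h
    push_neg at h
    have hmono := Tuple.monotone_sort a h
    simp only [Function.comp_apply, Equiv.apply_symm_apply] at hmono
    exact absurd hi.2 (not_lt.mpr hmono)
  calc (Finset.univ.filter (fun i => (a ∘ Tuple.sort a) j < a i)).card
      ≤ ((Finset.Ioi j).image (Tuple.sort a)).card := Finset.card_le_card hsub
    _ ≤ (Finset.Ioi j).card := Finset.card_image_le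
    _ = n - 1 - j.1 := Fin.card_Ioi j

/-- Monotonicity of order statistics under coordinatewise domination. -/
lemma orderStat_mono {n : ℕ} {a c : Fin n → ℝ} (h : ∀ i, a i ≤ c i) (j : Fin n) :
    (a ∘ Tuple.sort a) j ≤ (c ∘ Tuple.sort c) j := by
  by_contra hlt
  push_neg at hlt
  have hsub : (Finset.Iic j).image (Tuple.sort c) ⊆
      Finset.univ.filter (fun i => a i < (a ∘ Tuple.sort a) j) := by
    intro i hi
    rw [Finset.mem_image] at hi
    obtain ⟨t, ht, rfl⟩ := hi
    rw [Finset.mem_Iic] at ht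
    have h1 : (c ∘ Tuple.sort c) t ≤ (c ∘ Tuple.sort c) j := Tuple.monotone_sort c ht
    simp only [Finset.mem_filter, Finset.mem_univ, true_and]
    calc a ((Tuple.sort c) t) ≤ c ((Tuple.sort c) t) := h _
      _ ≤ (c ∘ Tuple.sort c) j := h1
      _ < (a ∘ Tuple.sort a) j := hlt
  have hcard := Finset.card_le_card hsub
  rw [Finset.card_image_of_injective _ (Tuple.sort c).injective, Fin.card_Iic] at hcard
  have := card_lt_orderStat a j
  omega

/-- A strictly monotone map `Fin m → Fin n` satisfies `j ≤ f j`. -/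
lemma strictMono_le_apply {m n : ℕ} {f : Fin m → Fin n} (hf : StrictMono f) :
    ∀ (j : ℕ) (hj : j < m), j ≤ (f ⟨j, hj⟩).1 := by
  intro j
  induction j with
  | zero => intro _; exact Nat.zero_le _
  | succ i ih =>
    intro hj
    have h1 : f ⟨i, by omega⟩ < f ⟨i + 1, hj⟩ := hf (by simp [Fin.lt_def])
    have h2 := ih (by omega)
    have h3 := Fin.lt_def.mp h1
    omega

/-- The sum of `b` over any set of at least `m` indices dominates the sum of the
`m` smallest values of `b`. -/
lemma sum_smallest_le {n m : ℕ} (b : Fin n → ℝ) (hb : ∀ i, 0 ≤ b i)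
    (S : Finset (Fin n)) (hS : m ≤ S.card) (hmn : m ≤ n) :
    ∑ t : Fin m, (b ∘ Tuple.sort b) (Fin.castLE hmn t) ≤ ∑ i ∈ S, b i := by
  set g : Fin n → ℝ := b ∘ Tuple.sort b with hg
  have hgmono : Monotone g := Tuple.monotone_sort b
  have hg0 : ∀ j, 0 ≤ g j := fun j => hb _
  set S' := S.image (Tuple.sort b).symm with hS'def
  have hS'card : S'.card = S.card :=
    Finset.card_image_of_injective _ (Equiv.injective _)
  have hsum : ∑ j ∈ S', g j = ∑ i ∈ S, b i := by
    rw [hS'def, Finset.sum_image (fun x _ y _ h => (Equiv.injective _) h)]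
    refine Finset.sum_congr rfl fun i _ => ?_
    simp [hg]
  obtain ⟨S'', hsub, hcard⟩ := Finset.exists_subset_card_eq (le_trans hS hS'card.symm.le)
  set e := S''.orderEmbOfFin hcard with he
  have hle : ∀ t : Fin m, Fin.castLE hmn t ≤ e t := by
    intro t
    have := strictMono_le_apply (f := fun t => e t) (e.strictMono) t.1 t.2
    exact this
  have him : Finset.image (fun t => e t) Finset.univ = S'' := by
    apply Finset.coe_injective
    rw [Finset.coe_image, Finset.coe_univ, Set.image_univ]
    exact Finset.range_orderEmbOfFin S'' hcard
  calc ∑ t : Fin m, g (Fin.castLE hmn t)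
      ≤ ∑ t : Fin m, g (e t) := Finset.sum_le_sum fun t _ => hgmono (hle t)
    _ = ∑ j ∈ S'', g j := by
        rw [← him, Finset.sum_image (fun x _ y _ h => e.injective h)]
    _ ≤ ∑ j ∈ S', g j :=
        Finset.sum_le_sum_of_subset_of_nonneg hsub fun j _ _ => hg0 j
    _ = ∑ i ∈ S, b i := hsum

/-- For `b ≥ 0` coordinatewise,
`φ_k(a + b) ≥ φ_k(a) + Σ_{i=1}^{n-2k} b*_i`, where `b*` is the non-decreasing
rearrangement of `b`. -/
theorem trimSum_add_nonneg_ge {n : ℕ} (k : ℕ) (hk1 : 1 ≤ k) (hk2 : 2 * k ≤ n)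
    (a b : Fin n → ℝ) (hb : ∀ i, 0 ≤ b i) :
    trimSum k hk1 hk2 a +
        ∑ i ∈ (Finset.range (n - 2 * k)).attach,
          (b ∘ Tuple.sort b) ⟨i.1, by have := Finset.mem_range.mp i.2; omega⟩ ≤
      trimSum k hk1 hk2 (fun i => a i + b i) := by
  set c : Fin n → ℝ := fun i => a i + b i with hc
  have hkn : k < n := by omega
  have hkn' : n - k - 1 < n := by omega
  set α : ℝ := (a ∘ Tuple.sort a) ⟨k, hkn⟩ with hα
  set β : ℝ := (a ∘ Tuple.sort a) ⟨n - k - 1, hkn'⟩ with hβ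
  set α' : ℝ := (c ∘ Tuple.sort c) ⟨k, hkn⟩ with hα'
  set β' : ℝ := (c ∘ Tuple.sort c) ⟨n - k - 1, hkn'⟩ with hβ'
  have hac : ∀ i, a i ≤ c i := fun i => le_add_of_nonneg_right (hb i)
  have hαα' : α ≤ α' := orderStat_mono hac _
  have hββ' : β ≤ β' := orderStat_mono hac _
  set S : Finset (Fin n) := Finset.univ.filter (fun i => α ≤ a i ∧ c i ≤ β') with hS
  have hScard : n - 2 * k ≤ S.card := by
    have h1 : (Finset.univ.filter (fun i => a i < α)).card ≤ k :=
      card_lt_orderStat a ⟨k, hkn⟩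
    have h2 : (Finset.univ.filter (fun i => β' < c i)).card ≤ n - 1 - (n - k - 1) :=
      card_gt_orderStat c ⟨n - k - 1, hkn'⟩
    have hunion : Finset.univ.filter (fun i => ¬(α ≤ a i ∧ c i ≤ β')) ⊆
        Finset.univ.filter (fun i => a i < α) ∪ Finset.univ.filter (fun i => β' < c i) := by
      intro i hi
      simp only [Finset.mem_filter, Finset.mem_univ, true_and, not_and_or, not_le] at hi
      simp only [Finset.mem_union, Finset.mem_filter, Finset.mem_univ, true_and]
      exact hi
    have hcardsplit : S.card +
        (Finset.univ.filter (fun i => ¬(α ≤ a i ∧ c i ≤ β'))).card = n := by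
      rw [hS, Finset.card_filter_add_card_filter_not]; simp
    have hcardU := Finset.card_le_card hunion
    have hcardUnion := Finset.card_union_le
      (Finset.univ.filter (fun i => a i < α)) (Finset.univ.filter (fun i => β' < c i))
    have huniv : (Finset.univ : Finset (Fin n)).card = n := by simp
    omega
  have hd0 : ∀ i, clip α β (a i) ≤ clip α' β' (c i) :=
    fun i => clip_le_clip hαα' hββ' (hac i)
  have hdS : ∀ i ∈ S, b i ≤ clip α' β' (c i) - clip α β (a i) := by
    intro i hi
    rw [hS, Finset.mem_filter] at hi
    obtain ⟨-, h1, h2⟩ := hi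
    have e1 : c i ≤ clip α' β' (c i) := by
      rw [clip, min_eq_left h2]; exact le_max_right _ _
    have e2 : clip α β (a i) ≤ a i := by
      rw [clip]; exact max_le h1 (min_le_left _ _)
    have hci : c i = a i + b i := rfl
    linarith
  have hmn : n - 2 * k ≤ n := by omega
  calc trimSum k hk1 hk2 a +
        ∑ i ∈ (Finset.range (n - 2 * k)).attach,
          (b ∘ Tuple.sort b) ⟨i.1, by have := Finset.mem_range.mp i.2; omega⟩
      ≤ trimSum k hk1 hk2 a + ∑ i ∈ S, b i := by
        refine add_le_add le_rfl ?_
        refine le_trans (le_of_eq ?_) (sum_smallest_le b hb S hScard hmn)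
        refine Finset.sum_bij
          (fun i _ => (Fin.mk i.1 (Finset.mem_range.mp i.2) : Fin (n - 2 * k)))
          (fun _ _ => Finset.mem_univ _) ?_ ?_ ?_
        · intro x _ y _ h
          have : x.1 = y.1 := congrArg Fin.val h
          exact Subtype.ext this
        · intro t _
          exact ⟨⟨t.1, Finset.mem_range.mpr t.2⟩, Finset.mem_attach _ _, rfl⟩
        · intro i _
          rfl
    _ ≤ trimSum k hk1 hk2 c := by
        have s1 : ∑ i ∈ S, b i ≤ ∑ i ∈ S, (clip α' β' (c i) - clip α β (a i)) :=
          Finset.sum_le_sum hdS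
        have s2 : ∑ i ∈ S, (clip α' β' (c i) - clip α β (a i)) ≤
            ∑ i : Fin n, (clip α' β' (c i) - clip α β (a i)) :=
          Finset.sum_le_sum_of_subset_of_nonneg (Finset.subset_univ S)
            (fun i _ _ => sub_nonneg.mpr (hd0 i))
        have s3 : ∑ i : Fin n, (clip α' β' (c i) - clip α β (a i)) =
            trimSum k hk1 hk2 c - trimSum k hk1 hk2 a := by
          rw [Finset.sum_sub_distrib]; rfl
        linarith
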